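/- Let X_1 = X_2 = X_3 = {0,1}. (i) The staging ~ over the variable order (X_1, X_2, X_3) in which the two depth-1 vertices are in different stages and all four depth-2 vertices form a single stage is simple, and its staged tree model M(~) equals the set of strictly positive P on {0,1}³ with X_3 independent of (X_1, X_2). (ii) The staging ~' over the variable order (X_1, X_3, X_2) in which the two depth-1 vertices form a single stage and the four depth-2 vertices (x_1, x_3) are staged according to the value of x_1 is not simple, yet the set of strictly positive joint pmfs of (X_1, X_2, X_3) induced by its staged tree model equals M(~). Hence the equivalence class of a simple staged tree can contain non-simple staged trees (Remark 1). -/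

import Mathlib

/-!
Encoding: joint probability mass functions of three binary variables are
real-valued functions on `Fin 3 → Bool`.  For a given variable order, a
depth-(i-1) vertex (context) is represented by a full assignment (in that order)
of which only the coordinates `k < i` are relevant.
-/

/-- `v` and `w` agree on all coordinates below `i`. -/
def agreeBelow (i : Fin 3) (v w : Fin 3 → Bool) : Prop :=
  ∀ k : Fin 3, k < i → v k = w k

/-- Two depth-(i-1) vertices are in the same position: `(v,z) ~_j (w,z)` for every
`j ∈ {i,…,p}` and every suffix `z`. -/
def samePos (rel : Fin 3 → (Fin 3 → Bool) → (Fin 3 → Bool) → Prop)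
    (i : Fin 3) (v w : Fin 3 → Bool) : Prop :=
  ∀ j : Fin 3, i ≤ j → ∀ v' w' : Fin 3 → Bool,
    agreeBelow i v' v → agreeBelow i w' w →
    (∀ k : Fin 3, i ≤ k → k < j → v' k = w' k) → rel j v' w'

/-- The staged tree model `M(~)` of a staging given by the stage relations `rel`:
strictly positive pmfs factorizing with conditional pmfs `y` constant on stages. -/
def memModel (rel : Fin 3 → (Fin 3 → Bool) → (Fin 3 → Bool) → Prop)
    (P : (Fin 3 → Bool) → ℝ) : Prop :=
  (∀ x, 0 < P x) ∧ (∑ x, P x = 1) ∧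
    ∃ y : Fin 3 → (Fin 3 → Bool) → Bool → ℝ,
      (∀ i v x, 0 < y i v x) ∧
      (∀ i v, ∑ x, y i v x = 1) ∧
      (∀ i v w, rel i v w → y i v = y i w) ∧
      (∀ x, P x = ∏ i, y i x (x i))

/-- The staging `~` over the order `(X_1, X_2, X_3)`: the two depth-1 vertices are
in different stages (`v ~_2 w` iff `v` and `w` share the value of `X_1`) and all
four depth-2 vertices form a single stage. -/
def relA : Fin 3 → (Fin 3 → Bool) → (Fin 3 → Bool) → Prop :=
  fun i v w => i = 1 → v 0 = w 0

/-- The staging `~'` over the order `(X_1, X_3, X_2)` (coordinates of full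
assignments `u` are `(x_1, x_3, x_2)`): the two depth-1 vertices form a single
stage, and the four depth-2 vertices `(x_1, x_3)` are staged according to the
value of `x_1`. -/
def relB : Fin 3 → (Fin 3 → Bool) → (Fin 3 → Bool) → Prop :=
  fun i v w => i = 2 → v 0 = w 0

lemma vec_eta (x : Fin 3 → Bool) : ![x 0, x 1, x 2] = x := by
  funext i; fin_cases i <;> simp

def e3 : Bool × Bool × Bool ≃ (Fin 3 → Bool) where
  toFun p := ![p.1, p.2.1, p.2.2]
  invFun x := (x 0, x 1, x 2)
  left_inv p := by simp
  right_inv x := by simpa using vec_eta x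

lemma sum3 (f : (Fin 3 → Bool) → ℝ) :
    ∑ x, f x = ∑ a, ∑ b, ∑ c, f ![a, b, c] := by
  rw [← Equiv.sum_comp e3 f, Fintype.sum_prod_type]
  refine Finset.sum_congr rfl fun a _ => ?_
  rw [Fintype.sum_prod_type]; rfl

lemma sum_swap3 (P : (Fin 3 → Bool) → ℝ) :
    ∑ u : Fin 3 → Bool, P ![u 0, u 2, u 1] = ∑ x, P x := by
  rw [sum3 (fun u => P ![u 0, u 2, u 1]), sum3 P]
  simp only [Matrix.cons_val_zero, Matrix.cons_val_one, Matrix.head_cons,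
    Matrix.cons_val_two, Matrix.tail_cons]
  refine Finset.sum_congr rfl fun a _ => ?_
  exact Finset.sum_comm

/--
**Remark 1.**
(i) The staging `~` (`relA`) over the order `(X_1, X_2, X_3)` is simple and its
staged tree model `M(~)` equals the set of strictly positive `P` on `{0,1}³` with
`X_3` independent of `(X_1, X_2)`.
(ii) The staging `~'` (`relB`) over the order `(X_1, X_3, X_2)` is not simple, yet
the set of strictly positive joint pmfs of `(X_1, X_2, X_3)` induced by its staged
tree model (via the reordering `Q (x_1, x_3, x_2) = P (x_1, x_2, x_3)`) equals
`M(~)`.  Hence the equivalence class of a simple staged tree can contain non-simple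
staged trees.
-/
theorem equivalence_class_contains_nonsimple :
    (∀ (i : Fin 3) (v w : Fin 3 → Bool), relA i v w → samePos relA i v w) ∧
      (∀ P : (Fin 3 → Bool) → ℝ,
        memModel relA P ↔
          ((∀ x, 0 < P x) ∧ (∑ x, P x = 1) ∧
            ∀ v : Fin 3 → Bool,
              P v = (∑ c : Bool, P ![v 0, v 1, c]) *
                (∑ a : Bool, ∑ b : Bool, P ![a, b, v 2]))) ∧
      ¬ (∀ (i : Fin 3) (v w : Fin 3 → Bool), relB i v w → samePos relB i v w) ∧
      (∀ P : (Fin 3 → Bool) → ℝ,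
        memModel relB (fun u => P ![u 0, u 2, u 1]) ↔ memModel relA P) := by
  refine ⟨?part1, ?part2, ?part3, ?part4⟩
  case part1 =>
    intro i v w hvw j hij v' w' hv hw hmid
    intro hj1
    subst hj1
    rcases lt_or_eq_of_le hij with hlt | heq
    · exact hmid 0 (by omega) (by omega)
    · have hi : i = 1 := heq
      subst hi
      rw [hv 0 (by decide), hw 0 (by decide)]
      exact hvw rfl
  case part3 =>
    intro H
    have h := H 1 (fun k => k = 0) (fun _ => false) (fun h => absurd h (by decide))
      2 (by decide) (fun k => k = 0) (fun _ => false)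
      (fun k hk => rfl) (fun k hk => rfl)
      (fun k hk1 hk2 => by
        have : k = 1 := by omega
        subst this; simp)
      rfl
    simp at h
  case part2 =>
    intro P
    constructor
    · rintro ⟨hpos, hsum, y, hy0, hy1, hyst, hyP⟩
      refine ⟨hpos, hsum, ?_⟩
      set d : Fin 3 → Bool := fun _ => false with hd
      have hc0 : ∀ v, y 0 v = y 0 d := fun v => hyst 0 v d (fun h => absurd h (by decide))
      have hc2 : ∀ v, y 2 v = y 2 d := fun v => hyst 2 v d (fun h => absurd h (by decide))
      have hc1 : ∀ v w : Fin 3 → Bool, v 0 = w 0 → y 1 v = y 1 w :=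
        fun v w h => hyst 1 v w (fun _ => h)
      set g : Bool → Bool → ℝ := fun a => y 1 ![a, false, false] with hg
      have key : ∀ a b c, P ![a, b, c] = y 0 d a * (g a b * y 2 d c) := by
        intro a b c
        rw [hyP, Fin.prod_univ_three]
        simp only [Matrix.cons_val_zero, Matrix.cons_val_one, Matrix.head_cons,
          Matrix.cons_val_two, Matrix.tail_cons]
        rw [hc0, hc2, hc1 ![a,b,c] ![a,false,false] (by simp)]
        ring
      intro v
      have hPv : P v = y 0 d (v 0) * (g (v 0) (v 1) * y 2 d (v 2)) := by
        rw [← vec_eta v, key]; simp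
      have h1 : (∑ c : Bool, P ![v 0, v 1, c]) = y 0 d (v 0) * g (v 0) (v 1) := by
        simp only [key]
        rw [← Finset.mul_sum]
        congr 1
        rw [← Finset.mul_sum, hy1 2 d, mul_one]
      have h2 : (∑ a : Bool, ∑ b : Bool, P ![a, b, v 2]) = y 2 d (v 2) := by
        simp only [key]
        have : ∀ a : Bool, (∑ b : Bool, y 0 d a * (g a b * y 2 d (v 2)))
            = y 0 d a * y 2 d (v 2) := by
          intro a
          rw [← Finset.mul_sum]
          have : (∑ b : Bool, g a b * y 2 d (v 2)) = y 2 d (v 2) := by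
            rw [← Finset.sum_mul, hy1 1, one_mul]
          rw [this]
        simp only [this]
        rw [← Finset.sum_mul, hy1 0, one_mul]
      rw [h1, h2, hPv]; ring
    · rintro ⟨hpos, hsum, hfac⟩
      refine ⟨hpos, hsum, ?_⟩
      set A : Bool → ℝ := fun a => ∑ b, ∑ c, P ![a, b, c] with hA
      set B : Bool → Bool → ℝ := fun a b => ∑ c, P ![a, b, c] with hB
      set C : Bool → ℝ := fun c => ∑ a, ∑ b, P ![a, b, c] with hC
      have hApos : ∀ a, 0 < A a := by
        intro a
        refine Finset.sum_pos (fun b _ => Finset.sum_pos (fun c _ => hpos _) ?_) ?_ <;>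
          exact Finset.univ_nonempty
      have hBpos : ∀ a b, 0 < B a b := fun a b => Finset.sum_pos (fun c _ => hpos _)
        Finset.univ_nonempty
      have hCpos : ∀ c, 0 < C c := fun c =>
        Finset.sum_pos (fun a _ => Finset.sum_pos (fun b _ => hpos _) Finset.univ_nonempty)
          Finset.univ_nonempty
      refine ⟨![fun _ x => A x, fun v x => B (v 0) x / A (v 0), fun _ x => C x],
        ?_, ?_, ?_, ?_⟩
      · intro i v x
        fin_cases i
        · exact hApos x
        · exact div_pos (hBpos _ _) (hApos _)
        · exact hCpos x
      · intro i v
        fin_cases i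
        · show (∑ x : Bool, A x) = 1
          rw [show (∑ x, A x) = ∑ a, ∑ b, ∑ c, P ![a,b,c] from rfl, ← sum3, hsum]
        · show (∑ x : Bool, B (v 0) x / A (v 0)) = 1
          rw [← Finset.sum_div]
          rw [show (∑ x, B (v 0) x) = A (v 0) from rfl]
          exact div_self (ne_of_gt (hApos _))
        · show (∑ x : Bool, C x) = 1
          rw [show (∑ x, C x) = ∑ c, ∑ a, ∑ b, P ![a,b,c] from rfl]
          rw [Finset.sum_comm]
          rw [show (∑ a, ∑ c, ∑ b, P ![a,b,c]) = ∑ a, ∑ b, ∑ c, P ![a,b,c] from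
            Finset.sum_congr rfl fun a _ => Finset.sum_comm, ← sum3, hsum]
      · intro i v w hrel
        fin_cases i
        · rfl
        · have h01 : v 0 = w 0 := hrel (by decide)
          show (fun x => B (v 0) x / A (v 0)) = fun x => B (w 0) x / A (w 0)
          rw [h01]
        · rfl
      · intro x
        rw [Fin.prod_univ_three]
        simp only [Matrix.cons_val_zero, Matrix.cons_val_one, Matrix.head_cons,
          Matrix.cons_val_two, Matrix.tail_cons]
        have hfx := hfac x
        have hBx : B (x 0) (x 1) = ∑ c : Bool, P ![x 0, x 1, c] := rfl
        have hCx : C (x 2) = ∑ a : Bool, ∑ b : Bool, P ![a, b, x 2] := rfl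
        rw [← hBx, ← hCx] at hfx
        rw [hfx]
        have hAne := ne_of_gt (hApos (x 0))
        field_simp
  case part4 =>
    intro P
    constructor
    · rintro ⟨hpos, hsum, y, hy0, hy1, hyst, hyP⟩
      set d : Fin 3 → Bool := fun _ => false with hd
      have hc0 : ∀ v, y 0 v = y 0 d := fun v => hyst 0 v d (fun h => absurd h (by decide))
      have hc1 : ∀ v, y 1 v = y 1 d := fun v => hyst 1 v d (fun h => absurd h (by decide))
      have hc2 : ∀ v w : Fin 3 → Bool, v 0 = w 0 → y 2 v = y 2 w :=
        fun v w h => hyst 2 v w (fun _ => h)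
      have hyP' : ∀ u : Fin 3 → Bool,
          P ![u 0, u 2, u 1] = ∏ i, y i u (u i) := hyP
      have hPx : ∀ x : Fin 3 → Bool, P x
          = y 0 d (x 0) * (y 2 ![x 0, false, false] (x 1) * y 1 d (x 2)) := by
        intro x
        have h := hyP' ![x 0, x 2, x 1]
        rw [Fin.prod_univ_three] at h
        simp only [Matrix.cons_val_zero, Matrix.cons_val_one, Matrix.head_cons,
          Matrix.cons_val_two, Matrix.tail_cons] at h
        rw [vec_eta] at h
        rw [h, hc0, hc1, hc2 ![x 0, x 2, x 1] ![x 0, false, false] (by simp)]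
        ring
      refine ⟨fun x => by
        rw [hPx x]
        exact mul_pos (hy0 0 d _) (mul_pos (hy0 2 _ _) (hy0 1 d _)), ?_, ?_⟩
      · rw [← sum_swap3 P]; exact hsum
      · refine ⟨![fun _ x => y 0 d x, fun v x => y 2 ![v 0, false, false] x,
          fun _ x => y 1 d x], ?_, ?_, ?_, ?_⟩
        · intro i v x
          fin_cases i
          · exact hy0 0 d x
          · exact hy0 2 _ x
          · exact hy0 1 d x
        · intro i v
          fin_cases i
          · exact hy1 0 d
          · exact hy1 2 _
          · exact hy1 1 d
        · intro i v w hrel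
          fin_cases i
          · rfl
          · have h01 : v 0 = w 0 := hrel (by decide)
            show (fun x => y 2 ![v 0, false, false] x) = fun x => y 2 ![w 0, false, false] x
            rw [h01]
          · rfl
        · intro x
          rw [Fin.prod_univ_three]
          simp only [Matrix.cons_val_zero, Matrix.cons_val_one, Matrix.head_cons,
            Matrix.cons_val_two, Matrix.tail_cons]
          rw [hPx]
          ring
    · rintro ⟨hpos, hsum, y, hy0, hy1, hyst, hyP⟩
      set d : Fin 3 → Bool := fun _ => false with hd
      have hc0 : ∀ v, y 0 v = y 0 d := fun v => hyst 0 v d (fun h => absurd h (by decide))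
      have hc2 : ∀ v, y 2 v = y 2 d := fun v => hyst 2 v d (fun h => absurd h (by decide))
      have hc1 : ∀ v w : Fin 3 → Bool, v 0 = w 0 → y 1 v = y 1 w :=
        fun v w h => hyst 1 v w (fun _ => h)
      have hQu : ∀ u : Fin 3 → Bool, P ![u 0, u 2, u 1]
          = y 0 d (u 0) * (y 1 ![u 0, false, false] (u 2) * y 2 d (u 1)) := by
        intro u
        rw [hyP ![u 0, u 2, u 1], Fin.prod_univ_three]
        simp only [Matrix.cons_val_zero, Matrix.cons_val_one, Matrix.head_cons,
          Matrix.cons_val_two, Matrix.tail_cons]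
        rw [hc0, hc2, hc1 ![u 0, u 2, u 1] ![u 0, false, false] (by simp)]
        ring
      refine ⟨fun u => by
        show 0 < P ![u 0, u 2, u 1]
        exact hpos _, ?_, ?_⟩
      · show (∑ u : Fin 3 → Bool, P ![u 0, u 2, u 1]) = 1
        rw [sum_swap3 P]; exact hsum
      · refine ⟨![fun _ x => y 0 d x, fun _ x => y 2 d x,
          fun v x => y 1 ![v 0, false, false] x], ?_, ?_, ?_, ?_⟩
        · intro i v x
          fin_cases i
          · exact hy0 0 d x
          · exact hy0 2 d x
          · exact hy0 1 _ x
        · intro i v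
          fin_cases i
          · exact hy1 0 d
          · exact hy1 2 d
          · exact hy1 1 _
        · intro i v w hrel
          fin_cases i
          · rfl
          · rfl
          · have h01 : v 0 = w 0 := hrel (by decide)
            show (fun x => y 1 ![v 0, false, false] x) = fun x => y 1 ![w 0, false, false] x
            rw [h01]
        · intro u
          show P ![u 0, u 2, u 1] = _
          rw [Fin.prod_univ_three]
          simp only [Matrix.cons_val_zero, Matrix.cons_val_one, Matrix.head_cons,
            Matrix.cons_val_two, Matrix.tail_cons]
          rw [hQu]
          ring
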